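/- arXiv:1209.5906 — 4 statements merged into one kernel-verified Lean document; each statement's English description precedes it below -/
import Mathlib

section
/- The A(K_{p,q})-coronal of the complete bipartite graph K_{p,q} equals ((p+q)x + 2pq)/(x² − pq), for all real x with x² ≠ pq (and xI − A(K_{p,q}) invertible). -/
open Matrix BigOperators

/-- The `M`-coronal `Γ_M(x) = 1ᵀ (xI - M)⁻¹ 1`, the sum of the entries of `(xI - M)⁻¹`. -/
noncomputable def coronal {n : Type*} [Fintype n] [DecidableEq n]
    (M : Matrix n n ℝ) (x : ℝ) : ℝ :=
  ∑ i, ∑ j, (x • (1 : Matrix n n ℝ) - M)⁻¹ i j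

instance {V W : Type*} [DecidableEq V] [DecidableEq W] :
    DecidableRel (completeBipartiteGraph V W).Adj := fun a b => by
  simp only [completeBipartiteGraph]
  infer_instance

/-- The adjacency coronal of the complete bipartite graph `K_{p,q}` equals
`((p+q)x + 2pq)/(x² - pq)`. -/
theorem coronal_adj_completeBipartite (p q : ℕ) (hp : 1 ≤ p) (hq : 1 ≤ q) (x : ℝ)
    (hx : x ^ 2 ≠ (p : ℝ) * q)
    (hinv : IsUnit (x • (1 : Matrix (Fin p ⊕ Fin q) (Fin p ⊕ Fin q) ℝ)
      - (completeBipartiteGraph (Fin p) (Fin q)).adjMatrix ℝ).det) :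
    coronal ((completeBipartiteGraph (Fin p) (Fin q)).adjMatrix ℝ) x =
      ((p + q : ℝ) * x + 2 * p * q) / (x ^ 2 - p * q) := by
  have hd : x ^ 2 - (p : ℝ) * q ≠ 0 := sub_ne_zero.mpr hx
  set A := (completeBipartiteGraph (Fin p) (Fin q)).adjMatrix ℝ with hA
  set M := x • (1 : Matrix (Fin p ⊕ Fin q) (Fin p ⊕ Fin q) ℝ) - A with hM
  set a : ℝ := (x + q) / (x ^ 2 - p * q)
  set b : ℝ := (x + p) / (x ^ 2 - p * q)
  set v : Fin p ⊕ Fin q → ℝ := Sum.elim (fun _ => a) (fun _ => b) with hv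
  have hMv : M *ᵥ v = fun _ => (1 : ℝ) := by
    funext i
    have hAv : (A *ᵥ v) i = match i with
        | Sum.inl _ => (q : ℝ) * b
        | Sum.inr _ => (p : ℝ) * a := by
      rw [hA, SimpleGraph.adjMatrix_mulVec_apply]
      cases i with
      | inl i =>
        have : (completeBipartiteGraph (Fin p) (Fin q)).neighborFinset (Sum.inl i)
            = Finset.univ.map ⟨Sum.inr, Sum.inr_injective⟩ := by
          ext j; rw [SimpleGraph.mem_neighborFinset]; cases j <;> simp [completeBipartiteGraph]
        simp [this, hv]
      | inr i =>
        have : (completeBipartiteGraph (Fin p) (Fin q)).neighborFinset (Sum.inr i)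
            = Finset.univ.map ⟨Sum.inl, Sum.inl_injective⟩ := by
          ext j; rw [SimpleGraph.mem_neighborFinset]; cases j <;> simp [completeBipartiteGraph]
        simp [this, hv]
    have : (M *ᵥ v) i = x * v i - (A *ᵥ v) i := by
      simp [hM, sub_mulVec, smul_mulVec]
    rw [this, hAv]
    cases i with
    | inl i =>
      show x * a - (q : ℝ) * b = 1
      simp only [a, b]
      rw [mul_div_assoc', mul_div_assoc', ← sub_div, div_eq_one_iff_eq hd]
      ring
    | inr i =>
      show x * b - (p : ℝ) * a = 1
      simp only [a, b]
      field_simp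
      ring
  have hinvv : M⁻¹ *ᵥ (fun _ => (1 : ℝ)) = v := by
    rw [← hMv, mulVec_mulVec, Matrix.nonsing_inv_mul M hinv, one_mulVec]
  have hsum : ∀ i, ∑ j, M⁻¹ i j = v i := by
    intro i
    have := congrFun hinvv i
    simpa [mulVec, dotProduct] using this
  calc coronal A x = ∑ i, ∑ j, M⁻¹ i j := rfl
    _ = ∑ i, v i := by simp_rw [hsum]
    _ = (p : ℝ) * a + (q : ℝ) * b := by
        simp [hv, Fintype.sum_sum_type, mul_comm]
    _ = ((p + q : ℝ) * x + 2 * p * q) / (x ^ 2 - p * q) := by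
        simp only [a, b]; field_simp; ring
end

section
/- The Q(K_{p,q})-coronal of the complete bipartite graph K_{p,q} equals ((p+q)x − (p−q)²)/(x² − (p+q)x), for all real x with x ∉ {0, p+q} (and xI − Q(K_{p,q}) invertible). -/
open Matrix BigOperators

/-- The signless Laplacian `Q(G) = D(G) + A(G)` of a simple graph. -/
def signlessLap {V : Type*} [Fintype V] [DecidableEq V]
    (G : SimpleGraph V) [DecidableRel G.Adj] : Matrix V V ℝ :=
  G.degMatrix ℝ + G.adjMatrix ℝ

lemma neighborFinset_inl (p q : ℕ) (i : Fin p) :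
    (completeBipartiteGraph (Fin p) (Fin q)).neighborFinset (Sum.inl i) =
      Finset.univ.map ⟨Sum.inr, Sum.inr_injective⟩ := by
  ext b; cases b <;> simp

lemma neighborFinset_inr (p q : ℕ) (i : Fin q) :
    (completeBipartiteGraph (Fin p) (Fin q)).neighborFinset (Sum.inr i) =
      Finset.univ.map ⟨Sum.inl, Sum.inl_injective⟩ := by
  ext b; cases b <;> simp

lemma degree_inl (p q : ℕ) (i : Fin p) :
    (completeBipartiteGraph (Fin p) (Fin q)).degree (Sum.inl i) = q := by
  rw [SimpleGraph.degree, neighborFinset_inl]; simp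

lemma degree_inr (p q : ℕ) (i : Fin q) :
    (completeBipartiteGraph (Fin p) (Fin q)).degree (Sum.inr i) = p := by
  rw [SimpleGraph.degree, neighborFinset_inr]; simp

/-- The signless Laplacian coronal of the complete bipartite graph `K_{p,q}` equals
`((p+q)x - (p-q)²)/(x² - (p+q)x)`. -/
theorem coronal_signlessLap_completeBipartite (p q : ℕ) (hp : 1 ≤ p) (hq : 1 ≤ q) (x : ℝ)
    (hx0 : x ≠ 0) (hxpq : x ≠ (p : ℝ) + q)
    (hinv : IsUnit (x • (1 : Matrix (Fin p ⊕ Fin q) (Fin p ⊕ Fin q) ℝ)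
      - signlessLap (completeBipartiteGraph (Fin p) (Fin q))).det) :
    coronal (signlessLap (completeBipartiteGraph (Fin p) (Fin q))) x =
      ((p + q : ℝ) * x - ((p : ℝ) - q) ^ 2) / (x ^ 2 - (p + q : ℝ) * x) := by
  set N : Matrix (Fin p ⊕ Fin q) (Fin p ⊕ Fin q) ℝ :=
    x • (1 : Matrix (Fin p ⊕ Fin q) (Fin p ⊕ Fin q) ℝ)
      - signlessLap (completeBipartiteGraph (Fin p) (Fin q)) with hN
  have hd : x ^ 2 - ((p : ℝ) + q) * x ≠ 0 := by
    have : x ^ 2 - ((p : ℝ) + q) * x = x * (x - ((p : ℝ) + q)) := by ring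
    rw [this]
    exact mul_ne_zero hx0 (sub_ne_zero.mpr hxpq)
  set d : ℝ := x ^ 2 - ((p : ℝ) + q) * x with hdd
  set a : ℝ := (x - p + q) / d with ha
  set b : ℝ := (x - q + p) / d with hb
  set w : Fin p ⊕ Fin q → ℝ := Sum.elim (fun _ => a) (fun _ => b) with hw
  have hNw : N *ᵥ w = fun _ => 1 := by
    funext v
    have : N *ᵥ w = x • w - ((completeBipartiteGraph (Fin p) (Fin q)).degMatrix ℝ *ᵥ w
        + (completeBipartiteGraph (Fin p) (Fin q)).adjMatrix ℝ *ᵥ w) := by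
      rw [hN, sub_mulVec, signlessLap, add_mulVec, smul_mulVec, one_mulVec]
    rw [this]
    cases v with
    | inl i =>
        simp only [Pi.sub_apply, Pi.add_apply, Pi.smul_apply, smul_eq_mul,
          SimpleGraph.degMatrix_mulVec_apply, SimpleGraph.adjMatrix_mulVec_apply,
          neighborFinset_inl, degree_inl, Finset.sum_map, Function.Embedding.coeFn_mk]
        simp only [hw, Sum.elim_inl, Sum.elim_inr, Finset.sum_const, Finset.card_univ,
          Fintype.card_fin, nsmul_eq_mul]
        rw [ha, hb]
        field_simp
        ring
    | inr i =>
        simp only [Pi.sub_apply, Pi.add_apply, Pi.smul_apply, smul_eq_mul,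
          SimpleGraph.degMatrix_mulVec_apply, SimpleGraph.adjMatrix_mulVec_apply,
          neighborFinset_inr, degree_inr, Finset.sum_map, Function.Embedding.coeFn_mk]
        simp only [hw, Sum.elim_inl, Sum.elim_inr, Finset.sum_const, Finset.card_univ,
          Fintype.card_fin, nsmul_eq_mul]
        rw [ha, hb]
        field_simp
        ring
  have hinvN : N⁻¹ *ᵥ (fun _ => 1) = w := by
    rw [← hNw, mulVec_mulVec, Matrix.nonsing_inv_mul _ hinv, one_mulVec]
  have hsum : coronal (signlessLap (completeBipartiteGraph (Fin p) (Fin q))) x = ∑ i, (N⁻¹ *ᵥ (fun _ => 1)) i := by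
    unfold coronal
    congr 1
    funext i
    simp [mulVec, dotProduct, hN]
  rw [hsum, hinvN, hw]
  rw [Fintype.sum_sum_type]
  simp only [Sum.elim_inl, Sum.elim_inr, Finset.sum_const, Finset.card_univ, Fintype.card_fin,
    nsmul_eq_mul]
  rw [ha, hb, hdd]
  field_simp
  ring
end

section
/- Let G be a graph on n vertices and p, q ≥ 1 integers. Then 0 is an adjacency eigenvalue of G ⋆ K_{p,q} with multiplicity at least n(p + q − 2), and for each adjacency eigenvalue λⱼ(G) of G, every root of x³ − λⱼ(G)x² − (pq + (p+q)λⱼ(G)²)x − pq·λⱼ(G)(2λⱼ(G) − 1) = 0 is an adjacency eigenvalue of G ⋆ K_{p,q}. -/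
open Matrix Polynomial BigOperators

/-- The neighbourhood corona `G₁ ⋆ G₂` of two simple graphs. -/
def ncorona {V₁ V₂ : Type*} (G₁ : SimpleGraph V₁) (G₂ : SimpleGraph V₂) :
    SimpleGraph (V₁ ⊕ V₁ × V₂) where
  Adj := fun a b =>
    match a, b with
    | Sum.inl v, Sum.inl w => G₁.Adj v w
    | Sum.inl v, Sum.inr iu => G₁.Adj v iu.1
    | Sum.inr iu, Sum.inl w => G₁.Adj w iu.1
    | Sum.inr iu, Sum.inr jw => iu.1 = jw.1 ∧ G₂.Adj iu.2 jw.2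
  symm := by
    refine ⟨?_⟩
    rintro (v | ⟨i, u⟩) (w | ⟨j, z⟩) h
    · exact G₁.adj_symm h
    · exact h
    · exact h
    · exact ⟨h.1.symm, G₂.adj_symm h.2⟩
  loopless := by
    refine ⟨?_⟩
    rintro (v | ⟨i, u⟩) h
    · exact G₁.irrefl h
    · exact G₂.irrefl h.2

noncomputable instance {V₁ V₂ : Type*} (G₁ : SimpleGraph V₁) (G₂ : SimpleGraph V₂) :
    DecidableRel (ncorona G₁ G₂).Adj := Classical.decRel _

section NCAux

open Sum Finset Module Submodule

set_option linter.unusedSectionVars false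
set_option maxHeartbeats 1000000

lemma eval_charpoly_eq {n : Type*} [Fintype n] [DecidableEq n] (M : Matrix n n ℝ) (x : ℝ) :
    (M.charpoly).eval x = (x • (1 : Matrix n n ℝ) - M).det := by
  rw [Matrix.charpoly, ← Polynomial.coe_evalRingHom, RingHom.map_det]
  congr 1
  ext i j
  by_cases h : i = j
  · subst h
    simp [charmatrix_apply_eq, Matrix.one_apply]
  · simp [charmatrix_apply_ne _ _ _ h, Matrix.one_apply_ne h]

lemma isRoot_charpoly_of_eigen {n : Type*} [Fintype n] [DecidableEq n] (M : Matrix n n ℝ)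
    (x : ℝ) (v : n → ℝ) (hv : v ≠ 0) (h : M.mulVec v = x • v) : M.charpoly.IsRoot x := by
  rw [IsRoot, eval_charpoly_eq, ← Matrix.exists_mulVec_eq_zero_iff]
  exact ⟨v, hv, by rw [Matrix.sub_mulVec, Matrix.smul_mulVec, Matrix.one_mulVec, h, sub_self]⟩

lemma exists_eigen_of_isRoot {n : Type*} [Fintype n] [DecidableEq n] (M : Matrix n n ℝ)
    (x : ℝ) (h : M.charpoly.IsRoot x) : ∃ v, v ≠ 0 ∧ M.mulVec v = x • v := by
  rw [IsRoot, eval_charpoly_eq, ← Matrix.exists_mulVec_eq_zero_iff] at h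
  obtain ⟨v, hv, hmv⟩ := h
  rw [Matrix.sub_mulVec, Matrix.smul_mulVec, Matrix.one_mulVec, sub_eq_zero] at hmv
  exact ⟨v, hv, hmv.symm⟩

lemma charmatrix_diag {n : Type*} [Fintype n] [DecidableEq n] (d : n → ℝ) :
    charmatrix (Matrix.diagonal d) = Matrix.diagonal (fun i => (X : ℝ[X]) - C (d i)) := by
  ext i j
  by_cases h : i = j
  · subst h; simp [charmatrix_apply_eq]
  · simp [charmatrix_apply_ne _ _ _ h, Matrix.diagonal_apply_ne _ h]

lemma charpoly_conj {n : Type*} [Fintype n] [DecidableEq n] (u D : Matrix n n ℝ)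
    (hu : u * star u = 1) (hu' : star u * u = 1) :
    (u * D * star u).charpoly = D.charpoly := by
  have hmap : ∀ (M N : Matrix n n ℝ), (M * N).map (C : ℝ →+* ℝ[X]) = M.map C * N.map C := by
    intro M N
    exact Matrix.map_mul
  have key : charmatrix (u * D * star u) = (u.map C) * charmatrix D * ((star u).map C) := by
    unfold charmatrix
    simp only [RingHom.mapMatrix_apply]
    rw [Matrix.mul_sub, Matrix.sub_mul, hmap, hmap]
    congr 1
    rw [Matrix.mul_assoc, Matrix.scalar_commute (X : ℝ[X]) (fun r' => Commute.all _ _)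
      ((star u).map C), ← Matrix.mul_assoc, ← hmap, hu,
      Matrix.map_one _ (map_zero C) (map_one C), Matrix.one_mul]
  unfold Matrix.charpoly
  rw [key, Matrix.det_mul, Matrix.det_mul, mul_comm, ← mul_assoc, ← Matrix.det_mul, ← hmap, hu',
    Matrix.map_one _ (map_zero C) (map_one C), Matrix.det_one, one_mul]

lemma charpoly_hermitian_eq_prod {n : Type*} [Fintype n] [DecidableEq n] {A : Matrix n n ℝ}
    (hA : A.IsHermitian) :
    A.charpoly = ∏ i, ((X : ℝ[X]) - C (hA.eigenvalues i)) := by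
  have hsp := hA.spectral_theorem
  have hd : Matrix.diagonal (RCLike.ofReal ∘ hA.eigenvalues) = Matrix.diagonal hA.eigenvalues := by
    congr 1
  have hu := (Matrix.mem_unitaryGroup_iff).mp hA.eigenvectorUnitary.2
  have hu' := (Matrix.mem_unitaryGroup_iff').mp hA.eigenvectorUnitary.2
  rw [hd] at hsp
  conv_lhs => rw [hsp]
  rw [Unitary.conjStarAlgAut_apply, charpoly_conj _ _ hu hu', Matrix.charpoly, charmatrix_diag, Matrix.det_diagonal]

lemma rootMultiplicity_zero_ge {n : Type*} [Fintype n] [DecidableEq n] {A : Matrix n n ℝ}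
    (hA : A.IsHermitian) :
    Fintype.card n - A.rank ≤ (A.charpoly).rootMultiplicity 0 := by
  classical
  rw [Polynomial.le_rootMultiplicity_iff (A.charpoly_monic.ne_zero)]
  rw [map_zero, sub_zero, charpoly_hermitian_eq_prod hA]
  set s : Finset n := Finset.univ.filter (fun i => hA.eigenvalues i = 0) with hs
  have h2 : ∏ i ∈ s, ((X : ℝ[X]) - C (hA.eigenvalues i)) = X ^ s.card := by
    rw [Finset.prod_congr rfl (fun i hi => ?_), Finset.prod_const]
    rw [hs, Finset.mem_filter] at hi
    rw [hi.2, map_zero, sub_zero]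
  have h1 : (X : ℝ[X]) ^ s.card ∣ ∏ i, ((X : ℝ[X]) - C (hA.eigenvalues i)) := by
    rw [← h2]
    exact Finset.prod_dvd_prod_of_subset s Finset.univ _ (Finset.subset_univ s)
  refine dvd_trans (pow_dvd_pow _ ?_) h1
  have hrank := hA.rank_eq_card_non_zero_eigs
  rw [Fintype.card_subtype] at hrank
  have hsplit := Finset.card_filter_add_card_filter_not
    (s := (Finset.univ : Finset n)) (p := fun i => hA.eigenvalues i ≠ 0)
  simp only [not_not] at hsplit
  rw [Finset.card_univ, ← hs] at hsplit
  omega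

variable {V₁ V₂ : Type*} (G₁ : SimpleGraph V₁) (G₂ : SimpleGraph V₂)

lemma ncorona_adj_ll (v w : V₁) : (ncorona G₁ G₂).Adj (inl v) (inl w) ↔ G₁.Adj v w := Iff.rfl
lemma ncorona_adj_lr (v j : V₁) (u : V₂) :
    (ncorona G₁ G₂).Adj (inl v) (inr (j, u)) ↔ G₁.Adj v j := Iff.rfl
lemma ncorona_adj_rl (v j : V₁) (u : V₂) :
    (ncorona G₁ G₂).Adj (inr (j, u)) (inl v) ↔ G₁.Adj v j := Iff.rfl
lemma ncorona_adj_rr (j j' : V₁) (u u' : V₂) :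
    (ncorona G₁ G₂).Adj (inr (j, u)) (inr (j', u')) ↔ j = j' ∧ G₂.Adj u u' := Iff.rfl

lemma finrank_span_range_le {ι M : Type*} [Fintype ι] [AddCommGroup M] [Module ℝ M] (v : ι → M) :
    Module.finrank ℝ (Submodule.span ℝ (Set.range v)) ≤ Fintype.card ι := by
  classical
  refine (finrank_span_le_card _).trans ?_
  rw [Set.toFinset_card]
  exact Fintype.card_range_le v

variable {V : Type*} [Fintype V] [DecidableEq V] (G : SimpleGraph V) [DecidableRel G.Adj]

lemma ncorona_rank_le (p q : ℕ) :
    ((ncorona G (completeBipartiteGraph (Fin p) (Fin q))).adjMatrix ℝ).rank ≤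
      3 * Fintype.card V := by
  classical
  set g : V → (V ⊕ V × (Fin p ⊕ Fin q)) → ℝ :=
    fun v => Sum.elim (fun w => if G.Adj v w then 1 else 0) (fun _ => 0) with hg
  set eL : V → (V ⊕ V × (Fin p ⊕ Fin q)) → ℝ :=
    fun v => Sum.elim (fun _ => 0)
      (fun ju => if ju.1 = v then Sum.elim (fun _ => (1:ℝ)) (fun _ => 0) ju.2 else 0) with heL
  set eR : V → (V ⊕ V × (Fin p ⊕ Fin q)) → ℝ :=
    fun v => Sum.elim (fun _ => 0)
      (fun ju => if ju.1 = v then Sum.elim (fun _ => (0:ℝ)) (fun _ => 1) ju.2 else 0) with heR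
  set F : (V ⊕ V) ⊕ V → (V ⊕ V × (Fin p ⊕ Fin q)) → ℝ :=
    Sum.elim (Sum.elim g eL) eR with hF
  set S : Submodule ℝ ((V ⊕ V × (Fin p ⊕ Fin q)) → ℝ) := Submodule.span ℝ (Set.range F) with hS
  have hmemg : ∀ v, g v ∈ S := fun v => subset_span ⟨inl (inl v), rfl⟩
  have hmemL : ∀ v, eL v ∈ S := fun v => subset_span ⟨inl (inr v), rfl⟩
  have hmemR : ∀ v, eR v ∈ S := fun v => subset_span ⟨inr v, rfl⟩
  have hcol : ∀ j, (fun i =>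
      (ncorona G (completeBipartiteGraph (Fin p) (Fin q))).adjMatrix ℝ i j) ∈ S := by
    rintro (w | ⟨v, a | b⟩)
    · have : (fun i => (ncorona G (completeBipartiteGraph (Fin p) (Fin q))).adjMatrix ℝ i (inl w)) =
          g w + ∑ v : V, (if G.Adj w v then (1:ℝ) else 0) • (eL v + eR v) := by
        funext i
        simp only [Pi.add_apply, Finset.sum_apply, Pi.smul_apply, smul_eq_mul]
        rcases i with v | ⟨j, u⟩
        · simp [SimpleGraph.adjMatrix_apply, ncorona_adj_ll, hg, heL, heR, G.adj_comm v w]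
        · rcases u with a | b <;>
            simp [SimpleGraph.adjMatrix_apply, ncorona_adj_rl, hg, heL, heR, mul_ite,
              Finset.sum_ite_eq]
      rw [this]
      exact S.add_mem (hmemg w) (Submodule.sum_mem _ fun v _ =>
        Submodule.smul_mem _ _ (S.add_mem (hmemL v) (hmemR v)))
    · have : (fun i => (ncorona G (completeBipartiteGraph (Fin p) (Fin q))).adjMatrix ℝ i
          (inr (v, inl a))) = g v + eR v := by
        funext i
        rcases i with w | ⟨j, u⟩
        · simp [SimpleGraph.adjMatrix_apply, ncorona_adj_lr, hg, heL, heR, G.adj_comm]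
        · rcases u with a' | b' <;>
            simp [SimpleGraph.adjMatrix_apply, ncorona_adj_rr, hg, heL, heR, eq_comm]
      rw [this]
      exact S.add_mem (hmemg v) (hmemR v)
    · have : (fun i => (ncorona G (completeBipartiteGraph (Fin p) (Fin q))).adjMatrix ℝ i
          (inr (v, inr b))) = g v + eL v := by
        funext i
        rcases i with w | ⟨j, u⟩
        · simp [SimpleGraph.adjMatrix_apply, ncorona_adj_lr, hg, heL, heR, G.adj_comm]
        · rcases u with a' | b' <;>
            simp [SimpleGraph.adjMatrix_apply, ncorona_adj_rr, hg, heL, heR, eq_comm]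
      rw [this]
      exact S.add_mem (hmemg v) (hmemL v)
  have hrange : LinearMap.range
      ((ncorona G (completeBipartiteGraph (Fin p) (Fin q))).adjMatrix ℝ).mulVecLin ≤ S := by
    rintro _ ⟨x, rfl⟩
    have : ((ncorona G (completeBipartiteGraph (Fin p) (Fin q))).adjMatrix ℝ).mulVecLin x =
        ∑ j, x j • (fun i =>
          (ncorona G (completeBipartiteGraph (Fin p) (Fin q))).adjMatrix ℝ i j) := by
      funext i
      simp only [Matrix.mulVecLin_apply, Matrix.mulVec, dotProduct, Finset.sum_apply,
        Pi.smul_apply, smul_eq_mul]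
      exact Finset.sum_congr rfl fun j _ => mul_comm _ _
    rw [this]
    exact Submodule.sum_mem _ fun j _ => Submodule.smul_mem _ _ (hcol j)
  calc ((ncorona G (completeBipartiteGraph (Fin p) (Fin q))).adjMatrix ℝ).rank
      ≤ finrank ℝ S := Submodule.finrank_mono hrange
    _ ≤ Fintype.card ((V ⊕ V) ⊕ V) := finrank_span_range_le F
    _ = 3 * Fintype.card V := by simp [Fintype.card_sum]; ring

end NCAux

/-- Corollary 2.3: `0` is an adjacency eigenvalue of `G ⋆ K_{p,q}` with multiplicity at least
`n(p+q-2)`, and for each adjacency eigenvalue `λ` of `G`, every root of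
`x³ - λx² - (pq + (p+q)λ²)x - pqλ(2λ - 1) = 0` is an adjacency eigenvalue of `G ⋆ K_{p,q}`. -/
theorem ncorona_completeBipartite_adj_spectrum {V : Type*} [Fintype V] [DecidableEq V]
    (G : SimpleGraph V) [DecidableRel G.Adj] (n p q : ℕ)
    (hn : Fintype.card V = n) (hp : 1 ≤ p) (hq : 1 ≤ q) :
    n * (p + q - 2) ≤
      (((ncorona G (completeBipartiteGraph (Fin p) (Fin q))).adjMatrix ℝ).charpoly).rootMultiplicity 0 ∧
    ∀ lam : ℝ, ((G.adjMatrix ℝ).charpoly).IsRoot lam →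
      ∀ x : ℝ, x ^ 3 - lam * x ^ 2 - ((p : ℝ) * q + ((p : ℝ) + q) * lam ^ 2) * x
          - (p : ℝ) * q * lam * (2 * lam - 1) = 0 →
        (((ncorona G (completeBipartiteGraph (Fin p) (Fin q))).adjMatrix ℝ).charpoly).IsRoot x := by
  classical
  constructor
  · -- Part 1: multiplicity of the eigenvalue 0
    have hherm : ((ncorona G (completeBipartiteGraph (Fin p) (Fin q))).adjMatrix ℝ).IsHermitian := by
      rw [Matrix.IsHermitian, Matrix.conjTranspose_eq_transpose_of_trivial]
      exact (ncorona G (completeBipartiteGraph (Fin p) (Fin q))).isSymm_adjMatrix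
    have h1 := rootMultiplicity_zero_ge hherm
    have h2 := ncorona_rank_le G p q
    have hcard : Fintype.card (V ⊕ V × (Fin p ⊕ Fin q)) = n * (p + q + 1) := by
      simp [Fintype.card_sum, Fintype.card_prod, hn]
      ring
    have hpq : p + q + 1 = (p + q - 2) + 3 := by omega
    have hmul : n * (p + q + 1) = n * (p + q - 2) + 3 * n := by
      rw [hpq, Nat.mul_add]
      ring
    rw [hn] at h2
    rw [hcard, hmul] at h1
    omega
  · -- Part 2: roots of the cubic are eigenvalues
    intro lam hlam x hx
    obtain ⟨z, hz, hAz⟩ := exists_eigen_of_isRoot _ _ hlam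
    set B : Matrix (Fin 3) (Fin 3) ℝ :=
      !![lam, lam * p, lam * q; lam, 0, (q : ℝ); lam, (p : ℝ), 0] with hB
    have hdetB : B.charpoly.IsRoot x := by
      rw [IsRoot, eval_charpoly_eq]
      have hmat : x • (1 : Matrix (Fin 3) (Fin 3) ℝ) - B =
          !![x - lam, -(lam * p), -(lam * q); -lam, x, -(q : ℝ); -lam, -(p : ℝ), x] := by
        ext i j
        fin_cases i <;> fin_cases j <;>
          simp [hB, Matrix.one_apply, Matrix.vecHead, Matrix.vecTail]
      rw [hmat, Matrix.det_fin_three]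
      norm_num [Matrix.vecHead, Matrix.vecTail, Matrix.cons_val]
      simp [Matrix.cons_val_two]
      linear_combination hx
    obtain ⟨w, hw, hBw⟩ := exists_eigen_of_isRoot B x hdetB
    have e0 : lam * w 0 + lam * p * w 1 + lam * q * w 2 = x * w 0 := by
      have := congrFun hBw 0
      simpa [Matrix.mulVec, dotProduct, Fin.sum_univ_three, hB, Matrix.vecHead, Matrix.vecTail] using this
    have e1 : lam * w 0 + q * w 2 = x * w 1 := by
      have := congrFun hBw 1
      simpa [Matrix.mulVec, dotProduct, Fin.sum_univ_three, hB, Matrix.vecHead, Matrix.vecTail] using this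
    have e2 : lam * w 0 + p * w 1 = x * w 2 := by
      have := congrFun hBw 2
      simpa [Matrix.mulVec, dotProduct, Fin.sum_univ_three, hB, Matrix.vecHead, Matrix.vecTail] using this
    have hz' : ∀ v, ∑ j, (if G.Adj v j then (1:ℝ) else 0) * z j = lam * z v := by
      intro v
      have := congrFun hAz v
      simpa [Matrix.mulVec, dotProduct, SimpleGraph.adjMatrix_apply] using this
    have key : ∀ (v : V) (c : ℝ),
        ∑ j, (if G.Adj v j then (1:ℝ) else 0) * (c * z j) = c * (lam * z v) := by
      intro v c
      rw [show ∑ j, (if G.Adj v j then (1:ℝ) else 0) * (c * z j)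
          = c * ∑ j, (if G.Adj v j then (1:ℝ) else 0) * z j by
        rw [Finset.mul_sum]; exact Finset.sum_congr rfl fun j _ => by ring, hz' v]
    have hgv : ∀ (v : V) (c : ℝ),
        (∑ x', if G.Adj x' v then c * z x' else 0) = c * (lam * z v) := by
      intro v c
      rw [show (∑ x', if G.Adj x' v then c * z x' else 0)
          = ∑ x', (if G.Adj v x' then (1:ℝ) else 0) * (c * z x') from
        Finset.sum_congr rfl fun x' _ => by simp [boole_mul, G.adj_comm x' v]]
      exact key v c
    set y : V ⊕ V × (Fin p ⊕ Fin q) → ℝ :=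
      Sum.elim (fun v => w 0 * z v)
        (fun ju => Sum.elim (fun _ => w 1 * z ju.1) (fun _ => w 2 * z ju.1) ju.2) with hy
    apply isRoot_charpoly_of_eigen _ x y
    · -- y ≠ 0
      obtain ⟨v, hv⟩ := Function.ne_iff.mp hz
      simp only [Pi.zero_apply] at hv
      intro hcon
      apply hw
      funext k
      fin_cases k
      · have := congrFun hcon (Sum.inl v)
        simp only [hy, Sum.elim_inl, Pi.zero_apply] at this
        simpa [hv] using mul_eq_zero.mp this
      · have := congrFun hcon (Sum.inr (v, Sum.inl ⟨0, hp⟩))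
        simp only [hy, Sum.elim_inr, Sum.elim_inl, Pi.zero_apply] at this
        simpa [hv] using mul_eq_zero.mp this
      · have := congrFun hcon (Sum.inr (v, Sum.inr ⟨0, hq⟩))
        simp only [hy, Sum.elim_inr, Pi.zero_apply] at this
        simpa [hv] using mul_eq_zero.mp this
    · -- the eigenvector equation
      funext i
      rcases i with v | ⟨v, a | b⟩
      · simp only [Matrix.mulVec, dotProduct, Fintype.sum_sum_type, Fintype.sum_prod_type,
          SimpleGraph.adjMatrix_apply, ncorona_adj_ll, ncorona_adj_lr, hy, Sum.elim_inl,
          Sum.elim_inr, Finset.sum_const, Finset.card_univ, Fintype.card_fin, nsmul_eq_mul,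
          Pi.smul_apply, smul_eq_mul]
        rw [Finset.sum_add_distrib, ← Finset.mul_sum, ← Finset.mul_sum, key, key, key]
        linear_combination z v * e0
      · simp only [Matrix.mulVec, dotProduct, Fintype.sum_sum_type, Fintype.sum_prod_type,
          SimpleGraph.adjMatrix_apply, ncorona_adj_rl, ncorona_adj_rr, hy, Sum.elim_inl,
          Sum.elim_inr, Finset.sum_const, Finset.card_univ, Fintype.card_fin, nsmul_eq_mul,
          Pi.smul_apply, smul_eq_mul, completeBipartiteGraph_adj, Sum.isLeft_inl, Sum.isRight_inr,
          Sum.isRight_inl, Sum.isLeft_inr]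
        norm_num
        rw [hgv]
        linear_combination z v * e1
      · simp only [Matrix.mulVec, dotProduct, Fintype.sum_sum_type, Fintype.sum_prod_type,
          SimpleGraph.adjMatrix_apply, ncorona_adj_rl, ncorona_adj_rr, hy, Sum.elim_inl,
          Sum.elim_inr, Finset.sum_const, Finset.card_univ, Fintype.card_fin, nsmul_eq_mul,
          Pi.smul_apply, smul_eq_mul, completeBipartiteGraph_adj, Sum.isLeft_inl, Sum.isRight_inr,
          Sum.isRight_inl, Sum.isLeft_inr]
        norm_num
        rw [hgv]
        linear_combination z v * e2
end

section
/- For integers n, k ≥ 1, the function f_{n,k}(x) = x + (n+1)k − √((4n+1)x² − 2(3n+1)kx + ((n+1)k)²) is well-defined on all of ℝ (the expression under the square root is always nonnegative), is strictly increasing on [0, k], strictly decreasing on [k, (2n+1)k/n], and satisfies f_{n,k}(x) > 0 for x ∈ (0, (2n+1)k/n). -/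
/-- The function `f_{n,k}(x) = x + (n+1)k - √((4n+1)x² - 2(3n+1)kx + ((n+1)k)²)`. -/
noncomputable def fnk (n k : ℕ) (x : ℝ) : ℝ :=
  x + ((n : ℝ) + 1) * k -
    Real.sqrt ((4 * (n : ℝ) + 1) * x ^ 2 - 2 * (3 * (n : ℝ) + 1) * k * x
      + (((n : ℝ) + 1) * k) ^ 2)

/-- `f_{n,k}` is well-defined on ℝ (the expression under the square root is nonnegative),
strictly increasing on `[0, k]`, strictly decreasing on `[k, (2n+1)k/n]`, and positive on
`(0, (2n+1)k/n)`. -/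
theorem fnk_properties (n k : ℕ) (hn : 1 ≤ n) (hk : 1 ≤ k) :
    (∀ x : ℝ, 0 ≤ (4 * (n : ℝ) + 1) * x ^ 2 - 2 * (3 * (n : ℝ) + 1) * k * x
        + (((n : ℝ) + 1) * k) ^ 2) ∧
    StrictMonoOn (fnk n k) (Set.Icc (0 : ℝ) k) ∧
    StrictAntiOn (fnk n k) (Set.Icc (k : ℝ) ((2 * (n : ℝ) + 1) * k / n)) ∧
    ∀ x ∈ Set.Ioo (0 : ℝ) ((2 * (n : ℝ) + 1) * k / n), 0 < fnk n k x := by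
  set N := (n : ℝ) with hNdef
  set K := (k : ℝ) with hKdef
  have hN : (1 : ℝ) ≤ N := by rw [hNdef]; exact_mod_cast hn
  have hK : (1 : ℝ) ≤ K := by rw [hKdef]; exact_mod_cast hk
  set q : ℝ → ℝ := fun x => (4 * N + 1) * x ^ 2 - 2 * (3 * N + 1) * K * x
      + ((N + 1) * K) ^ 2 with hqdef
  have hqx : ∀ x, q x = (4 * N + 1) * x ^ 2 - 2 * (3 * N + 1) * K * x
      + ((N + 1) * K) ^ 2 := fun x => rfl
  have hid : ∀ x, (4 * N + 1) * q x
      = ((4 * N + 1) * x - (3 * N + 1) * K) ^ 2 + 4 * N ^ 3 * K ^ 2 := by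
    intro x; rw [hqx x]; ring
  have hcoef : (0 : ℝ) < 4 * N + 1 := by linarith
  have hqpos : ∀ x, 0 < q x := by
    intro x
    have h1 : (0 : ℝ) < ((4 * N + 1) * x - (3 * N + 1) * K) ^ 2 + 4 * N ^ 3 * K ^ 2 := by
      positivity
    rw [← hid x] at h1
    nlinarith [h1, hcoef]
  have hspos : ∀ x, 0 < Real.sqrt (q x) := fun x => Real.sqrt_pos.2 (hqpos x)
  have hsq : ∀ x, Real.sqrt (q x) ^ 2 = q x := fun x => Real.sq_sqrt (hqpos x).le
  have hqd : ∀ x, HasDerivAt q (2 * (4 * N + 1) * x - 2 * (3 * N + 1) * K) x := by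
    intro x
    have h1 : HasDerivAt (fun y : ℝ => y ^ 2) (2 * x) x := by
      simpa using hasDerivAt_pow 2 x
    have h2 : HasDerivAt q ((4 * N + 1) * (2 * x) - 2 * (3 * N + 1) * K * 1) x :=
      ((h1.const_mul (4 * N + 1)).sub ((hasDerivAt_id x).const_mul
        (2 * (3 * N + 1) * K))).add_const _
    convert h2 using 1; ring
  have hderiv : ∀ x, HasDerivAt (fnk n k)
      (1 - ((4 * N + 1) * x - (3 * N + 1) * K) / Real.sqrt (q x)) x := by
    intro x
    have hs := (hqd x).sqrt (ne_of_gt (hqpos x))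
    have h1 : HasDerivAt (fun y : ℝ => y + (N + 1) * K) 1 x :=
      (hasDerivAt_id x).add_const _
    have h2 : HasDerivAt (fnk n k)
        (1 - (2 * (4 * N + 1) * x - 2 * (3 * N + 1) * K) / (2 * Real.sqrt (q x))) x :=
      h1.sub hs
    convert h2 using 1
    have := hspos x
    field_simp
  have hcont : ∀ s : Set ℝ, ContinuousOn (fnk n k) s :=
    fun s x _ => (hderiv x).continuousAt.continuousWithinAt
  refine ⟨fun x => (hqpos x).le, ?_, ?_, ?_⟩
  · apply strictMonoOn_of_deriv_pos (convex_Icc _ _) (hcont _)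
    intro x hx
    rw [interior_Icc] at hx
    rw [(hderiv x).deriv, sub_pos, div_lt_one (hspos x)]
    -- goal : (4N+1)x - (3N+1)K < sqrt (q x)
    rcases le_or_gt ((4 * N + 1) * x - (3 * N + 1) * K) 0 with h | h
    · exact lt_of_le_of_lt h (hspos x)
    · have hD : (4 * N + 1) * x - (3 * N + 1) * K < N * K := by nlinarith [hx.2]
      have h2 : ((4 * N + 1) * x - (3 * N + 1) * K) ^ 2 < q x := by
        have hp : (0:ℝ) < N * ((N * K - ((4 * N + 1) * x - (3 * N + 1) * K))
            * (N * K + ((4 * N + 1) * x - (3 * N + 1) * K))) :=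
          mul_pos (by linarith) (mul_pos (by linarith) (by linarith))
        have h2' : (4 * N + 1) * ((4 * N + 1) * x - (3 * N + 1) * K) ^ 2
            < (4 * N + 1) * q x := by
          rw [hid x]; nlinarith [hp]
        exact lt_of_mul_lt_mul_left h2' hcoef.le
      nlinarith [hsq x, hspos x]
  · apply strictAntiOn_of_deriv_neg (convex_Icc _ _) (hcont _)
    intro x hx
    rw [interior_Icc] at hx
    rw [(hderiv x).deriv, sub_neg, lt_div_iff₀ (hspos x), one_mul]
    -- goal : sqrt (q x) < (4N+1)x - (3N+1)K
    have hD : N * K < (4 * N + 1) * x - (3 * N + 1) * K := by nlinarith [hx.1]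
    have hDpos : 0 < (4 * N + 1) * x - (3 * N + 1) * K := by nlinarith
    have h2 : q x < ((4 * N + 1) * x - (3 * N + 1) * K) ^ 2 := by
      have hp : (0:ℝ) < N * ((((4 * N + 1) * x - (3 * N + 1) * K) - N * K)
          * (((4 * N + 1) * x - (3 * N + 1) * K) + N * K)) :=
        mul_pos (by linarith) (mul_pos (by linarith) (by nlinarith))
      have h2' : (4 * N + 1) * q x
          < (4 * N + 1) * ((4 * N + 1) * x - (3 * N + 1) * K) ^ 2 := by
        rw [hid x]; nlinarith [hp]
      exact lt_of_mul_lt_mul_left h2' hcoef.le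
    exact (Real.sqrt_lt' hDpos).2 h2
  · intro x hx
    have hxp := hx.1
    have hxu : x * N < (2 * N + 1) * K := (lt_div_iff₀ (by linarith : (0:ℝ) < N)).1 hx.2
    have h1 : 0 < x + (N + 1) * K := by nlinarith
    have h2 : q x < (x + (N + 1) * K) ^ 2 := by
      rw [hqx x]
      nlinarith [mul_pos hxp (show (0:ℝ) < (2 * N + 1) * K - N * x by linarith)]
    have h3 : Real.sqrt (q x) < x + (N + 1) * K := (Real.sqrt_lt' h1).2 h2
    have : fnk n k x = x + (N + 1) * K - Real.sqrt (q x) := rfl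
    rw [this]
    linarith
end
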